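/- Let β, β' ∈ ℝ/ℤ, let n ≥ 1, and let x, y ∈ ℝ/ℤ with x = y + z (mod 1) for some real z with α_{n+1} ≤ z ≤ α_n. Suppose β lies in the half-open arc [y, x) (that is, (β − y) mod 1 < z). Then there is a smallest integer k > 0 such that β' lies in the half-open arc [R^k y, R^k x) (that is, (β' − R^k y) mod 1 < z), and this k is at most q_{n+2} + q_{n+1} + q_n. -/

import Mathlib

open MeasureTheory Filter Set
open scoped ENNReal symmDiff Classical

noncomputable section

/-! ### Generic measurable dynamics -/

/-- `(X, T, μ)` is rigid: for some sequence `q n → ∞`, `μ (T^[q n] '' A ∆ A) → 0`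
for every measurable set `A`. -/
def Rigid {X : Type*} [MeasurableSpace X] (T : X → X) (μ : Measure X) : Prop :=
  ∃ q : ℕ → ℕ, Tendsto q atTop atTop ∧
    ∀ A : Set X, MeasurableSet A →
      Tendsto (fun n => μ (((T^[q n]) '' A) ∆ A)) atTop (nhds 0)

/-- `T` is uniquely ergodic: it admits exactly one invariant Borel probability measure. -/
def UniquelyErgodicMap {X : Type*} [MeasurableSpace X] (T : X → X) : Prop :=
  ∃! μ : Measure X, IsProbabilityMeasure μ ∧ MeasurePreserving T μ μ

/-- `(X, T, μ)` is of rank one. -/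
def RankOne {X : Type*} [MeasurableSpace X] (T : X → X) (μ : Measure X) : Prop :=
  ∃ F : ℕ → Set X, ∃ h : ℕ → ℕ, (∀ n, 1 ≤ h n) ∧ (∀ n, MeasurableSet (F n)) ∧
    (∀ n, ∀ i < h n, ∀ j < h n, i ≠ j → Disjoint ((T^[i]) '' F n) ((T^[j]) '' F n)) ∧
    ∀ A : Set X, MeasurableSet A → ∀ ε : ℝ≥0∞, 0 < ε → ∃ n : ℕ, ∃ s : Finset ℕ, ∃ rem : Bool,
      (∀ i ∈ s, i < h n) ∧
      μ (A ∆ ((⋃ i ∈ s, (T^[i]) '' F n) ∪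
        (if rem then (⋃ i ∈ Finset.range (h n), (T^[i]) '' F n)ᶜ else (∅ : Set X)))) < ε

/-! ### Words, languages, symbolic systems -/

/-- `w` is a factor of `v`. -/
def IsFactor {A : Type*} (w v : List A) : Prop := ∃ u u' : List A, v = u ++ w ++ u'

/-- `L` is a language: nonempty, closed under factors, and every word extends to a longer one. -/
def IsLanguage {A : Type*} (L : Set (List A)) : Prop :=
  L.Nonempty ∧ (∀ v ∈ L, ∀ w : List A, IsFactor w v → w ∈ L) ∧
    (∀ w ∈ L, ∃ v ∈ L, w.length < v.length ∧ IsFactor w v)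

/-- `L` is linearly recurrent: for some `K`, every word of length `n` occurs in
every word of length at least `K n`. -/
def LinearlyRecurrent {A : Type*} (L : Set (List A)) : Prop :=
  ∃ K : ℕ, 1 ≤ K ∧ ∀ w ∈ L, ∀ v ∈ L, K * w.length ≤ v.length → IsFactor w v

/-- `L` is minimal. -/
def MinimalLang {A : Type*} (L : Set (List A)) : Prop :=
  ∀ w ∈ L, ∃ n : ℕ, ∀ v ∈ L, v.length = n → IsFactor w v

/-- The factor of a sequence starting at `i`, of length `s`. -/
def wordAt {A : Type*} (x : ℕ → A) (i s : ℕ) : List A := List.ofFn fun j : Fin s => x (i + j)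

/-- The subshift `X_L`: sequences all of whose finite factors lie in `L`. -/
def XL {A : Type*} (L : Set (List A)) : Set (ℕ → A) := {x | ∀ i s : ℕ, wordAt x i s ∈ L}

/-- The one-sided shift `S` on `X_L`. -/
def shiftXL {A : Type*} (L : Set (List A)) (x : XL L) : XL L :=
  ⟨fun n => x.1 (n + 1), fun i s => by
    have h := x.2 (i + 1) s
    have e : wordAt (fun n => x.1 (n + 1)) i s = wordAt x.1 (i + 1) s := by
      unfold wordAt
      refine congrArg List.ofFn (funext fun j => congrArg x.1 ?_)
      omega
    rw [e]
    exact h⟩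

/-- The cylinder `[w] ⊆ X_L` of a word `w`. -/
def langCylinder {A : Type*} (L : Set (List A)) (w : List A) : Set (XL L) :=
  {x | ∀ i : Fin w.length, x.1 i = w.get i}

/-- `e_n(S, μ)`: the smallest positive measure of a cylinder of a word of `L` of length `n`. -/
def cylMinMeasure {A : Type*} [MeasurableSpace A] (L : Set (List A))
    (μ : Measure (XL L)) (n : ℕ) : ℝ≥0∞ :=
  sInf {v : ℝ≥0∞ | ∃ w ∈ L, w.length = n ∧ v = μ (langCylinder L w) ∧ 0 < v}

/-! ### Continued fraction data of `α` -/

/-- `ℤ + αℤ`. -/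
def ZPlusAlphaZ (α : ℝ) : Set ℝ := {x | ∃ m k : ℤ, x = (m : ℝ) + (k : ℝ) * α}

/-- `(α_{n-1}, α_n)` computed by the Euclidean algorithm, with `α_{-1} = 1`, `α_0 = α`. -/
def cfPair (α : ℝ) : ℕ → ℝ × ℝ
  | 0 => (1, α)
  | n + 1 =>
    ((cfPair α n).2, (cfPair α n).1 - (⌊(cfPair α n).1 / (cfPair α n).2⌋ : ℝ) * (cfPair α n).2)

/-- `α_n = |q_n α - p_n|`. -/
def alphaSeq (α : ℝ) (n : ℕ) : ℝ := (cfPair α n).2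

/-- The partial quotient `a_n = ⌊α_{n-2} / α_{n-1}⌋` (meaningful for `n ≥ 1`). -/
def pq (α : ℝ) (n : ℕ) : ℕ := (⌊(cfPair α (n - 1)).1 / (cfPair α (n - 1)).2⌋).toNat

/-- `(q_{n-1}, q_n)`, with `q_{-1} = 0`, `q_0 = 1` and `q_{n+1} = a_{n+1} q_n + q_{n-1}`. -/
def qPair (α : ℝ) : ℕ → ℕ × ℕ
  | 0 => (0, 1)
  | n + 1 => ((qPair α n).2, pq α (n + 1) * (qPair α n).2 + (qPair α n).1)

/-- `q_n`. -/
def qDen (α : ℝ) (n : ℕ) : ℕ := (qPair α n).2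

/-- `α` has bounded partial quotients. -/
def BoundedPartialQuotients (α : ℝ) : Prop := ∃ C : ℕ, ∀ n : ℕ, 1 ≤ n → pq α n ≤ C

/-! ### Rokhlin towers for the rotation and Ostrowski digits -/

/-- `x` lies in the arc `[a, a + l)` modulo 1. -/
def inArc (x a l : ℝ) : Prop := ∃ m : ℤ, a ≤ x + m ∧ x + m < a + l

/-- Left endpoint of the basis `B_n` of the large `n`-tower. -/
def largeBase (α : ℝ) (n : ℕ) : ℝ :=
  if Odd n then α - alphaSeq α (n - 1) + alphaSeq α n else α - alphaSeq α n

/-- Left endpoint of the basis `B'_n` of the small `n`-tower. -/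
def smallBase (α : ℝ) (n : ℕ) : ℝ :=
  if Odd n then α - alphaSeq α (n - 1) else α + alphaSeq α (n - 1) - alphaSeq α n

/-- Membership in the basis `B_n` of the large `n`-tower. -/
def InLargeBase (α : ℝ) (n : ℕ) (x : ℝ) : Prop := inArc x (largeBase α n) (alphaSeq α (n - 1))

/-- Distance from `x` to the reference endpoint (left endpoint for `n` odd, right
endpoint for `n` even) of the level `k` of the large `n`-tower. -/
def levelDist (α : ℝ) (n k : ℕ) (x : ℝ) : ℝ :=
  if Odd n then x - (largeBase α n + (k : ℝ) * α)
  else (largeBase α n + alphaSeq α (n - 1) + (k : ℝ) * α) - x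

/-- `x` lies in column `(b)` of the large `n`-tower. -/
def InLargeColumn (α : ℝ) (n b : ℕ) (x : ℝ) : Prop :=
  ∃ k : ℕ, k < qDen α n ∧
    inArc (levelDist α n k x) ((b : ℝ) * alphaSeq α n)
      (if b = pq α (n + 1) then alphaSeq α (n - 1) - (pq α (n + 1) : ℝ) * alphaSeq α n
       else alphaSeq α n)

/-- `x` lies in the small `n`-tower. -/
def InSmallTower (α : ℝ) (n : ℕ) (x : ℝ) : Prop :=
  ∃ k : ℕ, k < (qPair α n).1 ∧ inArc x (smallBase α n + (k : ℝ) * α) (alphaSeq α n)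

/-- The Ostrowski digit `b_m(β)` (meaningful for `m ≥ 2`), read in the towers at stage `m - 1`:
it is `b` if `β` lies in column `(b)` of the large `(m-1)`-tower with `b ≥ 1`, and `0`
otherwise. -/
def ostB (α β : ℝ) (m : ℕ) : ℕ :=
  if h : ∃ b : ℕ, 1 ≤ b ∧ InLargeColumn α (m - 1) b β then h.choose else 0

/-! ### Isolation and clustering of marked points -/

/-- The marked point `β_j` (with `β_j ≠ 1 - α`) is `(n, M)`-isolated. -/
def BetaIsolated {r : ℕ} (α : ℝ) (β : Fin r → ℝ) (j : Fin r) (n M : ℕ) : Prop :=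
  (∃ m₁ : ℕ, n - M ≤ m₁ ∧ m₁ ≤ n ∧ ostB α (β j) m₁ ≠ pq α m₁ - 1) ∧
  (∃ m₂ : ℕ, n - M ≤ m₂ ∧ m₂ ≤ n ∧ Odd m₂ ∧ ostB α (β j) m₂ ≠ pq α m₂) ∧
  (∃ m₃ : ℕ, n - M ≤ m₃ ∧ m₃ ≤ n ∧ Even m₃ ∧ ostB α (β j) m₃ ≠ pq α m₃) ∧
  ∀ i : Fin r, i ≠ j → β i ≠ 1 - α →
    ∃ m' : ℕ, n - M ≤ m' ∧ m' ≤ n ∧ ostB α (β j) m' ≠ ostB α (β i) m'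

/-- The point `α` is `(n, M)`-isolated. -/
def AlphaIsolated {r : ℕ} (α : ℝ) (β : Fin r → ℝ) (n M : ℕ) : Prop :=
  ∀ i : Fin r, β i ≠ 1 - α →
    (∃ m : ℕ, n - M ≤ m ∧ m ≤ n ∧ ostB α (β i) m ≠ pq α m - 1) ∧
    (∃ m' : ℕ, n - M ≤ m' ∧ m' ≤ n ∧ Odd m' ∧ ostB α (β i) m' ≠ pq α m') ∧
    (∃ m'' : ℕ, n - M ≤ m'' ∧ m'' ≤ n ∧ Even m'' ∧ ostB α (β i) m'' ≠ pq α m'')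

/-- All the marked points `β_i` (with `β_i ≠ 1 - α`) cluster on `α`. -/
def ClusterOnAlpha {r : ℕ} (α : ℝ) (β : Fin r → ℝ) : Prop :=
  ∃ m N : ℕ → ℕ, Tendsto m atTop atTop ∧ Tendsto N atTop atTop ∧
    (∀ k : ℕ, m k + N k < m (k + 1)) ∧
    ∀ k : ℕ, ∀ i : Fin r, β i ≠ 1 - α →
      (∀ n, m k ≤ n → n ≤ m k + N k → ostB α (β i) n = pq α n - 1) ∨
      (∀ n, m k ≤ n → n ≤ m k + N k → Even n → ostB α (β i) n = pq α n) ∨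
      (∀ n, m k ≤ n → n ≤ m k + N k → Odd n → ostB α (β i) n = pq α n)

/-! ### The generalized Veech–Sataev system -/

instance : Fact ((0 : ℝ) < 1) := ⟨zero_lt_one⟩

/-- The representative in `[0, 1)` of a point of the circle `ℝ/ℤ`. -/
def circleRepr (x : AddCircle (1 : ℝ)) : ℝ := (AddCircle.equivIco 1 0 x).1

/-- The rotation `R` of angle `α` on the circle. -/
def rotMap (α : ℝ) : AddCircle (1 : ℝ) → AddCircle (1 : ℝ) := fun x => x + (α : AddCircle (1 : ℝ))

/-- The index `j ∈ {0, …, r}` such that `β_j ≤ x < β_{j+1}` (with `β_0 = 0`,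
`β_{r+1} = 1`), i.e. the number of marked points `≤ x`. -/
def atomIdx {r : ℕ} (β : Fin r → ℝ) (x : ℝ) : Fin (r + 1) :=
  ⟨(Finset.univ.filter fun i => β i ≤ x).card,
    Nat.lt_succ_of_le (le_trans (Finset.card_filter_le _ _) (by simp))⟩

/-- The permutation `σ(x)`. -/
def sigmaOf {r d : ℕ} (β : Fin r → ℝ) (σ : Fin (r + 1) → Equiv.Perm (Fin d)) (x : ℝ) :
    Equiv.Perm (Fin d) := σ (atomIdx β x)

/-- The generalized Veech–Sataev map `T(x, s) = (Rx, σ(x) s)` on `(ℝ/ℤ) × {1, …, d}`. -/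
def VST {r d : ℕ} (α : ℝ) (β : Fin r → ℝ) (σ : Fin (r + 1) → Equiv.Perm (Fin d)) :
    AddCircle (1 : ℝ) × Fin d → AddCircle (1 : ℝ) × Fin d :=
  fun p => (rotMap α p.1, sigmaOf β σ (circleRepr p.1) p.2)

/-- Standing conditions on the marked points `β_1 < … < β_r`. -/
def MarkedPointsCond {r : ℕ} (α : ℝ) (β : Fin r → ℝ) : Prop :=
  (∀ i : Fin r, Irrational (β i) ∧ 0 < β i ∧ β i < 1) ∧
  StrictMono β ∧
  (∀ i : Fin r, β i ≠ 1 - α → β i ∉ ZPlusAlphaZ α) ∧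
  (∀ i j : Fin r, i ≠ j → β i ≠ 1 - α → β j ≠ 1 - α → β i - β j ∉ ZPlusAlphaZ α)

/-- Adjacent permutations are distinct: `σ_j ≠ σ_{j+1}` for `0 ≤ j ≤ r - 1`. -/
def SigmaAdjacentCond {r d : ℕ} (σ : Fin (r + 1) → Equiv.Perm (Fin d)) : Prop :=
  ∀ j : Fin r, σ j.castSucc ≠ σ j.succ

/-- The minimality condition: no nonempty proper subset of `{1, …, d}` is invariant
under all the `σ_i`. -/
def MinimalityCondition {r d : ℕ} (σ : Fin (r + 1) → Equiv.Perm (Fin d)) : Prop :=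
  ¬ ∃ A : Set (Fin d), A.Nonempty ∧ A ≠ Set.univ ∧ ∀ j : Fin (r + 1), (σ j) '' A = A

/-- The product inequality. -/
def ProductInequality {r d : ℕ} (α : ℝ) (β : Fin r → ℝ)
    (σ : Fin (r + 1) → Equiv.Perm (Fin d)) : Prop :=
  (∀ t : Fin r, β t = 1 - α → σ (Fin.last r) * σ t.castSucc ≠ σ 0 * σ t.succ) ∧
  ((∀ i : Fin r, β i ≠ 1 - α) → σ (Fin.last r) ≠ σ 0)

/-! ### Codings -/

/-- The letter read by the rotation with marked points at time `i`. -/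
def rotCode {r : ℕ} (α : ℝ) (β : Fin r → ℝ) (x : AddCircle (1 : ℝ)) (i : ℕ) : Fin (r + 1) :=
  atomIdx β (circleRepr ((rotMap α)^[i] x))

/-- The language `L'` of the rotation with marked points `β_1, …, β_r`. -/
def LRot {r : ℕ} (α : ℝ) (β : Fin r → ℝ) : Set (List (Fin (r + 1))) :=
  {w | ∃ x : AddCircle (1 : ℝ), ∀ i : Fin w.length, w.get i = rotCode α β x i.1}

/-- The letter of the natural coding of `T` at a point. -/
def vsCode {r d : ℕ} (β : Fin r → ℝ) (p : AddCircle (1 : ℝ) × Fin d) : Fin (r + 1) × Fin d :=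
  (atomIdx β (circleRepr p.1), p.2)

/-- The language `L(T)` of the natural coding of the generalized Veech–Sataev system. -/
def LVST {r d : ℕ} (α : ℝ) (β : Fin r → ℝ) (σ : Fin (r + 1) → Equiv.Perm (Fin d)) :
    Set (List (Fin (r + 1) × Fin d)) :=
  {w | ∃ p : AddCircle (1 : ℝ) × Fin d,
    ∀ i : Fin w.length, w.get i = vsCode β ((VST α β σ)^[i.1] p)}

/-- Bounded runs: there is a bound on the number of consecutive integers satisfying `P`. -/
def BoundedRun (P : ℕ → Prop) : Prop :=
  ∃ B : ℕ, ∀ m : ℕ, ∃ n : ℕ, m ≤ n ∧ n ≤ m + B ∧ ¬ P n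

end

namespace Stmt5Aux

variable {α : ℝ}

lemma basic (hα : Irrational α) (hα0 : 0 < α) (hα1 : α < 1) :
    ∀ m : ℕ, 0 < (cfPair α m).2 ∧ (cfPair α m).2 < (cfPair α m).1 ∧
      Irrational ((cfPair α m).1 / (cfPair α m).2) := by
  intro m
  induction m with
  | zero =>
      refine ⟨hα0, hα1, ?_⟩
      simpa [cfPair, one_div] using hα.inv
  | succ m ih =>
      obtain ⟨h2, h21, hirr⟩ := ih
      set A1 := (cfPair α m).1 with hA1
      set A2 := (cfPair α m).2 with hA2
      have hA2ne : A2 ≠ 0 := ne_of_gt h2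
      have hfr : (cfPair α (m+1)).2 = A2 * Int.fract (A1 / A2) := by
        show A1 - (⌊A1 / A2⌋ : ℝ) * A2 = A2 * Int.fract (A1 / A2)
        rw [Int.fract]
        field_simp
      have hfrpos : 0 < Int.fract (A1 / A2) := by
        rcases lt_or_eq_of_le (Int.fract_nonneg (A1 / A2)) with h | h
        · exact h
        · exfalso
          have : A1 / A2 = (⌊A1 / A2⌋ : ℝ) := by
            have := Int.fract_add_floor (A1 / A2)
            linarith [h.symm, this]
          exact hirr.ne_int ⌊A1 / A2⌋ this
      have hpos' : 0 < (cfPair α (m+1)).2 := by rw [hfr]; positivity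
      refine ⟨hpos', ?_, ?_⟩
      · show (cfPair α (m+1)).2 < (cfPair α (m+1)).1
        have h1 : (cfPair α (m+1)).1 = A2 := rfl
        rw [hfr, h1]
        nlinarith [Int.fract_lt_one (A1 / A2)]
      · have h1 : (cfPair α (m+1)).1 = A2 := rfl
        have : (cfPair α (m+1)).1 / (cfPair α (m+1)).2 = (Int.fract (A1 / A2))⁻¹ := by
          rw [hfr, h1]
          field_simp
        rw [this, Int.fract]
        exact (Irrational.sub_intCast hirr ⌊A1 / A2⌋).inv

lemma pq_cast (hα : Irrational α) (hα0 : 0 < α) (hα1 : α < 1) (m : ℕ) :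
    1 ≤ pq α (m+1) ∧ ((pq α (m+1) : ℤ) = ⌊(cfPair α m).1 / (cfPair α m).2⌋) := by
  obtain ⟨h2, h21, _⟩ := basic hα hα0 hα1 m
  have hr : (1:ℝ) < (cfPair α m).1 / (cfPair α m).2 := (one_lt_div h2).2 h21
  have hfl : 1 ≤ ⌊(cfPair α m).1 / (cfPair α m).2⌋ := by
    exact_mod_cast Int.le_floor.2 (by exact_mod_cast hr.le)
  have hpq : pq α (m+1) = (⌊(cfPair α m).1 / (cfPair α m).2⌋).toNat := by
    simp [pq]
  constructor
  · rw [hpq]; omega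
  · rw [hpq, Int.toNat_of_nonneg (by omega)]

lemma alpha_rec (hα : Irrational α) (hα0 : 0 < α) (hα1 : α < 1) (m : ℕ) :
    (cfPair α m).1 = (pq α (m+1) : ℝ) * (cfPair α m).2 + (cfPair α (m+1)).2 := by
  have h := (pq_cast hα hα0 hα1 m).2
  have h2 : (cfPair α (m+1)).2
      = (cfPair α m).1 - (⌊(cfPair α m).1 / (cfPair α m).2⌋ : ℝ) * (cfPair α m).2 := rfl
  have : ((pq α (m+1) : ℝ)) = ((⌊(cfPair α m).1 / (cfPair α m).2⌋ : ℤ) : ℝ) := by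
    exact_mod_cast congrArg (fun z : ℤ => (z : ℝ)) h
  rw [h2, this]; ring

lemma qDen_pos (hα : Irrational α) (hα0 : 0 < α) (hα1 : α < 1) (m : ℕ) :
    1 ≤ (qPair α m).2 := by
  induction m with
  | zero => simp [qPair]
  | succ m ih =>
      have h1 := (pq_cast hα hα0 hα1 m).1
      show 1 ≤ pq α (m+1) * (qPair α m).2 + (qPair α m).1
      calc 1 ≤ pq α (m+1) * (qPair α m).2 := Nat.one_le_iff_ne_zero.2 (by positivity)
        _ ≤ _ := Nat.le_add_right _ _

lemma qPair_fst_le (hα : Irrational α) (hα0 : 0 < α) (hα1 : α < 1) (m : ℕ) :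
    (qPair α m).1 ≤ (qPair α m).2 := by
  cases m with
  | zero => simp [qPair]
  | succ m =>
      have h1 := (pq_cast hα hα0 hα1 m).1
      have h2 := qDen_pos hα hα0 hα1 m
      show (qPair α m).2 ≤ pq α (m+1) * (qPair α m).2 + (qPair α m).1
      have : (qPair α m).2 ≤ pq α (m+1) * (qPair α m).2 := Nat.le_mul_of_pos_left _ (by omega)
      omega

lemma qalpha (hα : Irrational α) (hα0 : 0 < α) (hα1 : α < 1) (m : ℕ) :
    ∃ p1 p2 : ℤ, ((qPair α m).1 : ℝ) * α = p1 - (-1:ℝ)^m * (cfPair α m).1 ∧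
      ((qPair α m).2 : ℝ) * α = p2 + (-1:ℝ)^m * (cfPair α m).2 := by
  induction m with
  | zero => exact ⟨1, 0, by simp [qPair, cfPair], by simp [qPair, cfPair]⟩
  | succ m ih =>
      obtain ⟨p1, p2, h1, h2⟩ := ih
      have harec := alpha_rec hα hα0 hα1 m
      refine ⟨p2, (pq α (m+1) : ℤ) * p2 + p1, ?_, ?_⟩
      · show ((qPair α m).2 : ℝ) * α = p2 - (-1:ℝ)^(m+1) * (cfPair α m).2
        rw [h2, pow_succ]; ring
      · show ((pq α (m+1) * (qPair α m).2 + (qPair α m).1 : ℕ) : ℝ) * α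
          = ((pq α (m+1) : ℤ) * p2 + p1 : ℤ) + (-1:ℝ)^(m+1) * (cfPair α (m+1)).2
        have hcf : (cfPair α (m+1)).2 = (cfPair α m).1 - (pq α (m+1) : ℝ) * (cfPair α m).2 := by
          linarith [harec]
        push_cast
        rw [hcf, pow_succ]
        nlinarith [h1, h2, sq_nonneg ((-1:ℝ)^m)]


lemma alpha_lt_one (hα : Irrational α) (hα0 : 0 < α) (hα1 : α < 1) :
    ∀ m : ℕ, (cfPair α m).2 < 1 ∧ (cfPair α m).1 ≤ 1 := by
  intro m
  induction m with
  | zero => exact ⟨hα1, le_refl 1⟩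
  | succ m ih =>
      obtain ⟨h2, _⟩ := ih
      have h1 : (cfPair α (m+1)).1 = (cfPair α m).2 := rfl
      obtain ⟨hp, hlt, -⟩ := basic hα hα0 hα1 (m+1)
      exact ⟨lt_of_lt_of_le hlt (by rw [h1]; exact h2.le), by rw [h1]; exact h2.le⟩

set_option maxHeartbeats 800000 in
lemma cov (hα : Irrational α) (hα0 : 0 < α) (hα1 : α < 1) (m : ℕ) (c : ℝ) :
    (∃ k : ℕ, k < qDen α (m+1) ∧ ∃ p : ℤ,
      0 ≤ (-1:ℝ)^m * (c - (k:ℝ)*α) + p ∧ (-1:ℝ)^m * (c - (k:ℝ)*α) + p < alphaSeq α m) ∨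
    (∃ k : ℕ, k < qDen α m ∧ ∃ p : ℤ,
      0 < (-1:ℝ)^(m+1) * (c - (k:ℝ)*α) + p ∧
        (-1:ℝ)^(m+1) * (c - (k:ℝ)*α) + p ≤ alphaSeq α (m+1)) := by
  induction m with
  | zero =>
      have hq1 : qDen α 1 = pq α 1 := by
        have h : qDen α 1 = pq α 1 * 1 + 0 := rfl
        omega
      have hpqc : ((pq α 1 : ℕ) : ℝ) = (⌊(1:ℝ)/α⌋ : ℝ) := by
        exact_mod_cast congrArg (fun z : ℤ => (z:ℝ)) (pq_cast hα hα0 hα1 0).2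
      have hpq1 : 1 ≤ pq α 1 := (pq_cast hα hα0 hα1 0).1
      have ha1 : alphaSeq α 1 = 1 - (⌊(1:ℝ)/α⌋:ℝ)*α := rfl
      have ha0 : alphaSeq α 0 = α := rfl
      obtain ⟨jZ, hjZ⟩ : ∃ jZ:ℤ, jZ = ⌊Int.fract c / α⌋ := ⟨_, rfl⟩
      have hx0 : 0 ≤ Int.fract c := Int.fract_nonneg c
      have hx1 : Int.fract c < 1 := Int.fract_lt_one c
      have hjZ0 : 0 ≤ jZ := hjZ ▸ Int.floor_nonneg.2 (div_nonneg hx0 hα0.le)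
      have hlow : (jZ:ℝ) * α ≤ Int.fract c := by
        have h1 : (jZ:ℝ) ≤ Int.fract c / α := hjZ ▸ Int.floor_le _
        calc (jZ:ℝ)*α ≤ (Int.fract c / α)*α := mul_le_mul_of_nonneg_right h1 hα0.le
          _ = Int.fract c := by field_simp
      have hhigh : Int.fract c < ((jZ:ℝ)+1) * α := by
        have h1 : Int.fract c / α < (jZ:ℝ)+1 := hjZ ▸ Int.lt_floor_add_one _
        calc Int.fract c = (Int.fract c / α)*α := by field_simp
          _ < ((jZ:ℝ)+1)*α := mul_lt_mul_of_pos_right h1 hα0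
      have hjc : ((jZ.toNat:ℕ):ℝ) = (jZ:ℝ) := by
        exact_mod_cast congrArg (fun z : ℤ => (z:ℝ)) (Int.toNat_of_nonneg hjZ0)
      by_cases hj : jZ.toNat < pq α 1
      · left
        have key : (-1:ℝ)^0 * (c - ((jZ.toNat:ℕ):ℝ)*α) + ((-⌊c⌋ : ℤ):ℝ)
            = Int.fract c - (jZ:ℝ)*α := by
          rw [Int.fract, hjc]
          push_cast
          ring
        refine ⟨jZ.toNat, by rw [hq1]; exact hj, -⌊c⌋, ?_, ?_⟩
        · rw [key]; linarith
        · rw [key, ha0]; linarith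
      · right
        have hle : (pq α 1 : ℤ) ≤ jZ := by omega
        have hax : ((pq α 1 : ℕ):ℝ) * α ≤ Int.fract c := by
          have h1 : ((pq α 1:ℕ):ℝ) ≤ (jZ:ℝ) := by exact_mod_cast hle
          nlinarith [hlow]
        have key2 : (-1:ℝ)^(0+1) * (c - ((0:ℕ):ℝ)*α) + ((⌊c⌋+1 : ℤ):ℝ)
            = 1 - Int.fract c := by
          rw [Int.fract]; push_cast; ring
        refine ⟨0, by norm_num [show qDen α 0 = 1 from rfl], ⌊c⌋ + 1, ?_, ?_⟩
        · rw [key2]; linarith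
        · rw [key2, ha1]
          rw [hpqc] at hax
          linarith
  | succ m ih =>
      set β1 := alphaSeq α m with hb1d
      set β2 := alphaSeq α (m+1) with hb2d
      set β3 := alphaSeq α (m+2) with hb3d
      obtain ⟨hβ2pos, hβ21, -⟩ := basic hα hα0 hα1 (m+1)
      obtain ⟨hβ3pos, hβ32, -⟩ := basic hα hα0 hα1 (m+2)
      have hb21 : β2 < β1 := hβ21
      have hb32 : β3 < β2 := hβ32
      have hb2p : 0 < β2 := hβ2pos
      have hb3p : 0 < β3 := hβ3pos
      have ha1 : 1 ≤ pq α (m+2) := (pq_cast hα hα0 hα1 (m+1)).1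
      have hrec : β1 = (pq α (m+2):ℝ) * β2 + β3 := alpha_rec hα hα0 hα1 (m+1)
      have hQrec : qDen α (m+2) = pq α (m+2) * qDen α (m+1) + qDen α m := rfl
      set ε := (-1:ℝ)^m with hεd
      have he : ε * ε = 1 := by
        rcases neg_one_pow_eq_or ℝ m with h | h <;> rw [hεd, h] <;> norm_num
      have hε1 : (-1:ℝ)^(m+1) = -ε := by rw [hεd, pow_succ]; ring
      have hε2 : (-1:ℝ)^(m+2) = ε := by rw [hεd, pow_succ, pow_succ]; ring
      obtain ⟨P0, P1, hq1, hq2⟩ := qalpha hα hα0 hα1 (m+1)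
      have hE0 : (qDen α m:ℝ) * α = (P0:ℝ) + ε * β1 := by
        have h : ((qPair α (m+1)).1 : ℝ) * α = P0 - (-1:ℝ)^(m+1) * (cfPair α (m+1)).1 := hq1
        rw [hε1] at h
        have h2 : ((qPair α (m+1)).1 : ℝ) = (qDen α m : ℝ) := rfl
        have h3 : (cfPair α (m+1)).1 = β1 := rfl
        rw [h2, h3] at h
        linarith [h]
      have hE1 : (qDen α (m+1):ℝ) * α = (P1:ℝ) - ε * β2 := by
        have h : ((qPair α (m+1)).2 : ℝ) * α = P1 + (-1:ℝ)^(m+1) * (cfPair α (m+1)).2 := hq2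
        rw [hε1] at h
        have h3 : (cfPair α (m+1)).2 = β2 := rfl
        have h2 : ((qPair α (m+1)).2 : ℝ) = (qDen α (m+1) : ℝ) := rfl
        rw [h3, h2] at h
        linarith [h]
      have he2 : ((((-1:ℤ)^m : ℤ)):ℝ) = ε := by rw [hεd]; push_cast; ring
      rcases ih with ⟨k, hk, p, ht0, ht1⟩ | ⟨k, hk, p, ht0, ht1⟩
      · -- Case A
        set t := (-1:ℝ)^m * (c - (k:ℝ)*α) + p with htdef
        have htd : t = ε * (c - (k:ℝ)*α) + p := by rw [htdef, hεd]
        by_cases hA : t ≤ β3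
        · by_cases ht : 0 < t
          · right
            refine ⟨k, hk, p, ?_, ?_⟩ <;> rw [hε2, ← htd]
            · exact ht
            · exact hA
          · have ht00 : t = 0 := le_antisymm (not_lt.1 ht) ht0
            left
            have hkQ2 : k < qDen α (m+2) := by
              have h5 : qDen α (m+1) ≤ pq α (m+2) * qDen α (m+1) :=
                Nat.le_mul_of_pos_left _ (by omega)
              omega
            have hval : (-1:ℝ)^(m+1) * (c - (k:ℝ)*α) + ((-p : ℤ):ℝ) = -t := by
              rw [hε1]; push_cast; linarith [htd]
            exact ⟨k, hkQ2, -p, by rw [hval, ht00]; norm_num,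
              by rw [hval, ht00]; simpa using hb2p⟩
        · push_neg at hA
          obtain ⟨jZ, hjZd⟩ : ∃ jZ:ℤ, jZ = ⌊(β1 - t)/β2⌋ := ⟨_, rfl⟩
          have hjZ0 : 0 ≤ jZ := hjZd ▸ Int.floor_nonneg.2 (div_nonneg (by linarith) hb2p.le)
          have hja : jZ < (pq α (m+2):ℤ) := by
            rw [hjZd]
            apply Int.floor_lt.2
            rw [div_lt_iff₀ hb2p]
            push_cast
            linarith [hrec, hA]
          have hjc : ((jZ.toNat:ℕ):ℝ) = (jZ:ℝ) := by
            exact_mod_cast congrArg (fun z : ℤ => (z:ℝ)) (Int.toNat_of_nonneg hjZ0)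
          have hfl1 : ((jZ.toNat:ℕ):ℝ) * β2 ≤ β1 - t := by
            rw [hjc]
            have h1 : (jZ:ℝ) ≤ (β1 - t)/β2 := hjZd ▸ Int.floor_le _
            exact (le_div_iff₀ hb2p).1 h1
          have hfl2 : β1 - t < (((jZ.toNat:ℕ):ℝ) + 1) * β2 := by
            rw [hjc]
            have h1 : (β1 - t)/β2 < (jZ:ℝ) + 1 := hjZd ▸ Int.lt_floor_add_one _
            exact (div_lt_iff₀ hb2p).1 h1
          left
          have hkb : k + qDen α m + jZ.toNat * qDen α (m+1) < qDen α (m+2) := by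
            have hja2 : jZ.toNat + 1 ≤ pq α (m+2) := by omega
            have h6 : (jZ.toNat + 1) * qDen α (m+1) ≤ pq α (m+2) * qDen α (m+1) :=
              Nat.mul_le_mul_right _ hja2
            have h7 : jZ.toNat * qDen α (m+1) + qDen α (m+1) ≤ pq α (m+2) * qDen α (m+1) := by
              calc jZ.toNat * qDen α (m+1) + qDen α (m+1) = (jZ.toNat+1) * qDen α (m+1) := by
                    ring
                _ ≤ pq α (m+2) * qDen α (m+1) := h6
            omega
          have hval : (-1:ℝ)^(m+1) * (c - ((k + qDen α m + jZ.toNat * qDen α (m+1) : ℕ):ℝ)*α)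
              + ((-p - (-1:ℤ)^m * P0 - (jZ.toNat:ℤ) * (-1:ℤ)^m * P1 : ℤ):ℝ)
              = β1 - t - ((jZ.toNat:ℕ):ℝ)*β2 := by
            rw [hε1]
            push_cast [he2]
            linear_combination ε * hE0 + ((jZ.toNat:ℕ):ℝ) * ε * hE1 + htd
              + (β1 - ((jZ.toNat:ℕ):ℝ) * β2) * he
          refine ⟨k + qDen α m + jZ.toNat * qDen α (m+1), hkb,
            -p - (-1:ℤ)^m * P0 - (jZ.toNat:ℤ) * (-1:ℤ)^m * P1, ?_, ?_⟩
          · rw [hval]; linarith [hfl1]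
          · rw [hval]; linarith [hfl2]
      · -- Case B
        set t := (-1:ℝ)^(m+1) * (c - (k:ℝ)*α) + p with htdef
        have htd : t = -ε * (c - (k:ℝ)*α) + p := by rw [htdef, hε1]
        by_cases htb : t < β2
        · left
          have hkQ2 : k < qDen α (m+2) := by omega
          exact ⟨k, hkQ2, p, ht0.le, htb⟩
        · have hteq : t = β2 := le_antisymm ht1 (not_lt.1 htb)
          left
          have hkb : k + qDen α (m+1) < qDen α (m+2) := by
            have h5 : qDen α (m+1) ≤ pq α (m+2) * qDen α (m+1) :=
              Nat.le_mul_of_pos_left _ (by omega)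
            omega
          have hval : (-1:ℝ)^(m+1) * (c - ((k + qDen α (m+1) : ℕ):ℝ)*α)
              + ((p - (-1:ℤ)^m * P1 : ℤ):ℝ) = 0 := by
            rw [hε1]
            push_cast [he2]
            linear_combination ε * hE1 - htd + hteq - β2 * he
          exact ⟨k + qDen α (m+1), hkb, p - (-1:ℤ)^m * P1,
            by rw [hval], by rw [hval]; exact hb2p⟩

lemma hit (hα : Irrational α) (hα0 : 0 < α) (hα1 : α < 1) (m : ℕ) (c : ℝ) :
    ∃ k : ℕ, k < qDen α (m+2) + qDen α (m+1) ∧ ∃ p : ℤ,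
      0 ≤ c - (k:ℝ)*α + p ∧ c - (k:ℝ)*α + p < alphaSeq α (m+1) := by
  obtain ⟨hβ2pos, hβ21, -⟩ := basic hα hα0 hα1 (m+1)
  obtain ⟨hβ3pos, hβ32, -⟩ := basic hα hα0 hα1 (m+2)
  have hb2p : 0 < alphaSeq α (m+1) := hβ2pos
  have hb3p : 0 < alphaSeq α (m+2) := hβ3pos
  have hb32 : alphaSeq α (m+2) < alphaSeq α (m+1) := by
    have h3 : (cfPair α (m+2)).1 = alphaSeq α (m+1) := rfl
    rw [← h3]; exact hβ32
  obtain ⟨P1', P1, h1', h1⟩ := qalpha hα hα0 hα1 (m+1)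
  obtain ⟨P2', P2, h2', h2⟩ := qalpha hα hα0 hα1 (m+2)
  have hE1 : (qDen α (m+1):ℝ) * α = P1 + (-1:ℝ)^(m+1) * alphaSeq α (m+1) := h1
  have hE2 : (qDen α (m+2):ℝ) * α = P2 + (-1:ℝ)^(m+2) * alphaSeq α (m+2) := h2
  have hs2eq : (-1:ℝ)^(m+2) = -((-1:ℝ)^(m+1)) := by rw [pow_succ]; ring
  rcases neg_one_pow_eq_or ℝ (m+1) with hs | hs
  · -- (-1)^(m+1) = 1
    have hs2 : (-1:ℝ)^(m+2) = -1 := by rw [hs2eq, hs]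
    rcases cov hα hα0 hα1 (m+1) c with ⟨k, hk, p, h0, hlt⟩ | ⟨k, hk, p, h0, hle⟩
    · have hk2 : k < qDen α (m+2) := hk
      rw [hs] at h0 hlt
      exact ⟨k, by omega, p, by linarith [h0], by linarith [hlt]⟩
    · rw [hs2] at h0 hle hE2
      have hval : c - ((k + qDen α (m+2) : ℕ):ℝ)*α + ((P2 - p : ℤ):ℝ)
          = alphaSeq α (m+2) - ((-1) * (c - (k:ℝ)*α) + (p:ℝ)) := by
        push_cast
        linear_combination -hE2
      refine ⟨k + qDen α (m+2), by omega, P2 - p, ?_, ?_⟩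
      · rw [hval]; linarith [hle]
      · rw [hval]; linarith [h0, hb32]
  · -- (-1)^(m+1) = -1
    have hs2 : (-1:ℝ)^(m+2) = 1 := by rw [hs2eq, hs]; norm_num
    rcases cov hα hα0 hα1 (m+1) c with ⟨k, hk, p, h0, hlt⟩ | ⟨k, hk, p, h0, hle⟩
    · have hk2 : k < qDen α (m+2) := hk
      rw [hs] at h0 hlt hE1
      by_cases ht : 0 < (-1) * (c - (k:ℝ)*α) + (p:ℝ)
      · have hval : c - ((k + qDen α (m+1) : ℕ):ℝ)*α + ((P1 - p : ℤ):ℝ)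
            = alphaSeq α (m+1) - ((-1) * (c - (k:ℝ)*α) + (p:ℝ)) := by
          push_cast
          linear_combination -hE1
        refine ⟨k + qDen α (m+1), by omega, P1 - p, ?_, ?_⟩
        · rw [hval]; linarith [hlt]
        · rw [hval]; linarith [ht]
      · have ht0 : (-1) * (c - (k:ℝ)*α) + (p:ℝ) = 0 := le_antisymm (not_lt.1 ht) h0
        refine ⟨k, by omega, -p, ?_, ?_⟩
        · push_cast; linarith [ht0]
        · push_cast; linarith [ht0, hb2p]
    · rw [hs2] at h0 hle
      refine ⟨k, by omega, p, ?_, ?_⟩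
      · linarith [h0]
      · linarith [hle, hb32]

end Stmt5Aux

theorem stmt_5 (α : ℝ) (hα : Irrational α) (hα0 : 0 < α) (hα1 : α < 1)
    (β β' : ℝ) (n : ℕ) (hn : 1 ≤ n) (x y z : ℝ)
    (hz1 : alphaSeq α (n + 1) ≤ z) (hz2 : z ≤ alphaSeq α n) (hxy : x = y + z)
    (hβin : Int.fract (β - y) < z) :
    ∃ k : ℕ, 0 < k ∧ Int.fract (β' - (y + (k : ℝ) * α)) < z ∧
      (∀ k' : ℕ, 0 < k' → Int.fract (β' - (y + (k' : ℝ) * α)) < z → k ≤ k') ∧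
      k ≤ qDen α (n + 2) + qDen α (n + 1) + qDen α n := by
  classical
  obtain ⟨k0, hk0, p, h0, h1⟩ := Stmt5Aux.hit hα hα0 hα1 n (β' - y - α)
  have hlt1 : alphaSeq α (n+1) < 1 := (Stmt5Aux.alpha_lt_one hα hα0 hα1 (n+1)).1
  have hfr : Int.fract (β' - (y + ((k0+1:ℕ):ℝ) * α)) < z := by
    have hXp : β' - (y + ((k0+1:ℕ):ℝ)*α) + (p:ℝ) = β' - y - α - (k0:ℝ)*α + p := by
      push_cast; ring
    have h3 : Int.fract (β' - (y + ((k0+1:ℕ):ℝ)*α) + (p:ℝ))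
        = β' - (y + ((k0+1:ℕ):ℝ)*α) + (p:ℝ) :=
      Int.fract_eq_self.2 ⟨by rw [hXp]; linarith, by rw [hXp]; linarith⟩
    rw [Int.fract_add_intCast] at h3
    rw [h3, hXp]
    linarith
  have hex : ∃ k : ℕ, 0 < k ∧ Int.fract (β' - (y + (k : ℝ) * α)) < z :=
    ⟨k0 + 1, Nat.succ_pos _, hfr⟩
  refine ⟨Nat.find hex, (Nat.find_spec hex).1, (Nat.find_spec hex).2,
    fun k' h1' h2' => Nat.find_min' hex ⟨h1', h2'⟩, ?_⟩
  calc Nat.find hex ≤ k0 + 1 := Nat.find_min' hex ⟨Nat.succ_pos _, hfr⟩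
    _ ≤ qDen α (n+2) + qDen α (n+1) := hk0
    _ ≤ qDen α (n+2) + qDen α (n+1) + qDen α n := Nat.le_add_right _ _
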